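/- Let Ω be a convex domain in ℝ^d with C¹ boundary containing the origin in its interior. Suppose μ ∈ [0,1] and sup_{t>0} t^{−(d−1−μ)} |E(t)| ≤ C₁. Then there is a constant C (depending on Ω and C₁) such that for all t ≥ 1 and 0 < ε ≤ 1, |E_ε(t)| ≤ C max{ t^{d−1−μ}, t^{d−1} ε }. -/

import Mathlib

open MeasureTheory Real Pointwise

/-- Number of integer lattice points in the dilate `t • Ω`. -/
noncomputable def latticeCount {d : ℕ} (Ω : Set (EuclideanSpace ℝ (Fin d))) (t : ℝ) : ℝ :=
  ((t • Ω) ∩ {x : EuclideanSpace ℝ (Fin d) | ∀ i, ∃ m : ℤ, x i = (m : ℝ)}).ncard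

/-- The lattice remainder `E(t) = N(t) - t^d vol(Ω)`. -/
noncomputable def latticeErr {d : ℕ} (Ω : Set (EuclideanSpace ℝ (Fin d))) (t : ℝ) : ℝ :=
  latticeCount Ω t - t ^ d * (volume Ω).toReal

/-- A lattice point `k ∈ ℤ^d` regarded as a vector of `ℝ^d`. -/
noncomputable def intVec {d : ℕ} (k : Fin d → ℤ) : EuclideanSpace ℝ (Fin d) :=
  WithLp.toLp 2 (fun i => (k i : ℝ))

/-- The mollified counting function `N_ε(t) = Σ_{k ∈ ℤ^d} (χ_{tΩ} * ζ_ε)(k)`,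
where `ζ_ε(x) = ε^{-d} ζ(x/ε)`. -/
noncomputable def mollifiedCount {d : ℕ} (Ω : Set (EuclideanSpace ℝ (Fin d)))
    (ζ : EuclideanSpace ℝ (Fin d) → ℝ) (ε t : ℝ) : ℝ :=
  ∑' k : Fin d → ℤ, ∫ y : EuclideanSpace ℝ (Fin d),
    Set.indicator (t • Ω) (fun _ => (1 : ℝ)) (intVec k - y) *
      ((ε ^ d)⁻¹ * ζ (ε⁻¹ • y))

/-- The mollified remainder `E_ε(t) = N_ε(t) - t^d vol(Ω)`. -/
noncomputable def mollifiedErr {d : ℕ} (Ω : Set (EuclideanSpace ℝ (Fin d)))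
    (ζ : EuclideanSpace ℝ (Fin d) → ℝ) (ε t : ℝ) : ℝ :=
  mollifiedCount Ω ζ ε t - t ^ d * (volume Ω).toReal

/-- `Ω` has `C¹` boundary. -/
def C1Boundary {d : ℕ} (Ω : Set (EuclideanSpace ℝ (Fin d))) : Prop :=
  ∃ F : EuclideanSpace ℝ (Fin d) → ℝ, ContDiff ℝ 1 F ∧ Ω = {x | F x < 0} ∧
    (∀ x ∈ frontier Ω, fderiv ℝ F x ≠ 0)

/- ### Auxiliary lemmas -/

section Aux

variable {d : ℕ} {Ω : Set (EuclideanSpace ℝ (Fin d))} {δ₀ : ℝ}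

lemma abs_apply_le_norm' (x : EuclideanSpace ℝ (Fin d)) (i : Fin d) : |x i| ≤ ‖x‖ := by
  rw [EuclideanSpace.norm_eq]
  have : |x i| = Real.sqrt ((x i)^2) := (Real.sqrt_sq_eq_abs _).symm
  rw [this]
  apply Real.sqrt_le_sqrt
  have h2 : (x i)^2 = ‖x i‖^2 := by rw [Real.norm_eq_abs, sq_abs]
  rw [h2]
  exact Finset.single_le_sum (f := fun j => ‖x j‖^2) (fun j _ => by positivity) (Finset.mem_univ i)

lemma intVec_inj' : Function.Injective (@intVec d) := by
  intro k k' h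
  funext i
  have := congrFun (congrArg WithLp.ofLp h) i
  simpa [intVec] using this

lemma lattice_finite' {B : Set (EuclideanSpace ℝ (Fin d))} (hB : Bornology.IsBounded B) :
    {k : Fin d → ℤ | intVec k ∈ B}.Finite := by
  obtain ⟨R, hR⟩ := hB.subset_closedBall 0
  apply Set.Finite.subset (Set.Finite.pi (fun i : Fin d => Set.finite_Icc (-⌈R⌉) ⌈R⌉))
  intro k hk
  have hk2 := hR hk
  simp only [Metric.mem_closedBall, dist_zero_right] at hk2
  intro i _
  have h3 : |(k i : ℝ)| ≤ R := le_trans (abs_apply_le_norm' (intVec k) i) hk2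
  rw [abs_le] at h3
  have hc : (k i : ℝ) ≤ (⌈R⌉ : ℝ) := le_trans h3.2 (Int.le_ceil R)
  have hc2 : ((-⌈R⌉ : ℤ) : ℝ) ≤ (k i : ℝ) := by push_cast; linarith [Int.le_ceil R]
  exact ⟨by exact_mod_cast hc2, by exact_mod_cast hc⟩

lemma latticeCount_eq' (Ω : Set (EuclideanSpace ℝ (Fin d))) (s : ℝ) :
    latticeCount Ω s = Nat.card {k : Fin d → ℤ | intVec k ∈ s • Ω} := by
  unfold latticeCount
  have himg : (s • Ω) ∩ {x : EuclideanSpace ℝ (Fin d) | ∀ i, ∃ m : ℤ, x i = (m : ℝ)}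
      = intVec '' {k : Fin d → ℤ | intVec k ∈ s • Ω} := by
    ext x
    constructor
    · rintro ⟨hx, hl⟩
      choose m hm using hl
      refine ⟨m, ?_, ?_⟩
      · show intVec m ∈ s • Ω
        have : intVec m = x := by ext i; exact (hm i).symm
        rwa [this]
      · ext i; exact (hm i).symm
    · rintro ⟨k, hk, rfl⟩
      exact ⟨hk, fun i => ⟨k i, rfl⟩⟩
  rw [himg, Set.ncard_image_of_injective _ intVec_inj', Nat.card_coe_set_eq]

lemma tsum_indicator_eq' (B : Set (EuclideanSpace ℝ (Fin d))) :
    ∑' k : Fin d → ℤ, Set.indicator B (fun _ => (1:ℝ)) (intVec k)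
      = Nat.card {k : Fin d → ℤ | intVec k ∈ B} := by
  have heq : ∀ k : Fin d → ℤ, Set.indicator B (fun _ => (1:ℝ)) (intVec k)
      = Set.indicator {k : Fin d → ℤ | intVec k ∈ B} (fun _ => (1:ℝ)) k := by
    intro k
    by_cases h : intVec k ∈ B <;> simp [Set.indicator_apply, h]
  simp_rw [heq]
  rw [← tsum_subtype]
  rw [tsum_const]
  simp

lemma summable_indicator_lattice' (B : Set (EuclideanSpace ℝ (Fin d)))
    (hB : Bornology.IsBounded B) :
    Summable (fun k : Fin d → ℤ => Set.indicator B (fun _ => (1:ℝ)) (intVec k)) := by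
  apply summable_of_ne_finset_zero (s := (lattice_finite' hB).toFinset)
  intro k hk
  simp only [Set.Finite.mem_toFinset, Set.mem_setOf_eq] at hk
  simp [Set.indicator_apply, hk]

lemma ball_smul_mem' (hconv : Convex ℝ Ω)
    (hball : Metric.ball (0 : EuclideanSpace ℝ (Fin d)) (2 * δ₀) ⊆ Ω)
    {ε : ℝ} (hε : 0 < ε) {y : EuclideanSpace ℝ (Fin d)} (hy : ‖y‖ < ε * δ₀) (c : ℝ)
    (hc : |c| ≤ 2 / ε) : c • y ∈ Ω := by
  apply hball
  simp only [Metric.mem_ball, dist_zero_right, norm_smul, Real.norm_eq_abs]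
  calc |c| * ‖y‖ ≤ (2/ε) * ‖y‖ := by
        apply mul_le_mul_of_nonneg_right hc (norm_nonneg y)
    _ < (2/ε) * (ε * δ₀) := by
        apply mul_lt_mul_of_pos_left hy (by positivity)
    _ = 2 * δ₀ := by field_simp

lemma geom_up' (hconv : Convex ℝ Ω)
    (hball : Metric.ball (0 : EuclideanSpace ℝ (Fin d)) (2 * δ₀) ⊆ Ω)
    {t ε : ℝ} (ht : 1 ≤ t) (hε : 0 < ε)
    {y x : EuclideanSpace ℝ (Fin d)} (hy : ‖y‖ < ε * δ₀)
    (hx : x - y ∈ t • Ω) : x ∈ (t + ε/2) • Ω := by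
  obtain ⟨ω, hω, hωx⟩ := hx
  have hz : (2/ε) • y ∈ Ω := ball_smul_mem' hconv hball hε hy _ (by rw [abs_of_pos (by positivity)])
  have ht' : (0:ℝ) < t + ε/2 := by linarith
  refine ⟨(t/(t+ε/2)) • ω + ((ε/2)/(t+ε/2)) • ((2/ε) • y), ?_, ?_⟩
  · exact hconv hω hz (by positivity) (by positivity) (by field_simp)
  · show (t + ε/2) • _ = x
    have hx' : x = t • ω + y := by
      rw [show t • ω = x - y from hωx]; abel
    rw [hx']
    match_scalars <;> field_simp <;> ring

lemma geom_down' (hconv : Convex ℝ Ω)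
    (hball : Metric.ball (0 : EuclideanSpace ℝ (Fin d)) (2 * δ₀) ⊆ Ω)
    {t ε : ℝ} (ht : 1 ≤ t) (hε : 0 < ε) (hε1 : ε ≤ 1)
    {y x : EuclideanSpace ℝ (Fin d)} (hy : ‖y‖ < ε * δ₀)
    (hx : x ∈ (t - ε/2) • Ω) : x - y ∈ t • Ω := by
  obtain ⟨ω, hω, hωx⟩ := hx
  have hz : (-(2/ε)) • y ∈ Ω := by
    apply ball_smul_mem' hconv hball hε hy
    rw [abs_neg, abs_of_pos (by positivity)]
  have ht' : (0:ℝ) < t := by linarith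
  refine ⟨((t - ε/2)/t) • ω + ((ε/2)/t) • ((-(2/ε)) • y), ?_, ?_⟩
  · apply hconv hω hz (div_nonneg (by linarith) ht'.le) (by positivity) (by field_simp; ring)
  · show t • _ = x - y
    have hx' : x = (t - ε/2) • ω := (show (t - ε/2) • ω = x from hωx).symm
    rw [hx']
    match_scalars <;> field_simp <;> ring

lemma w_integral_one (ζ : EuclideanSpace ℝ (Fin d) → ℝ)
    (hζint : ∫ x : EuclideanSpace ℝ (Fin d), ζ x = 1) {ε : ℝ} (hε : 0 < ε) :
    ∫ y : EuclideanSpace ℝ (Fin d), (ε ^ d)⁻¹ * ζ (ε⁻¹ • y) = 1 := by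
  rw [integral_const_mul, Measure.integral_comp_inv_smul_of_nonneg volume ζ hε.le,
    finrank_euclideanSpace_fin, hζint, smul_eq_mul, mul_one, inv_mul_cancel₀]
  positivity

lemma w_integrable (ζ : EuclideanSpace ℝ (Fin d) → ℝ) (hζsm : ContDiff ℝ (⊤ : ℕ∞) ζ)
    (hζsupp : Function.support ζ ⊆ Metric.ball 0 δ₀) {ε : ℝ} (hε : 0 < ε) :
    Integrable (fun y : EuclideanSpace ℝ (Fin d) => (ε ^ d)⁻¹ * ζ (ε⁻¹ • y)) := by
  apply Integrable.const_mul
  have hc : Continuous fun y : EuclideanSpace ℝ (Fin d) => ζ (ε⁻¹ • y) :=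
    hζsm.continuous.comp (continuous_const_smul _)
  apply hc.integrable_of_hasCompactSupport
  apply HasCompactSupport.intro (isCompact_closedBall (0:EuclideanSpace ℝ (Fin d)) (ε * δ₀))
  intro y hy
  by_contra h
  have := hζsupp (Function.mem_support.2 h)
  simp only [Metric.mem_ball, dist_zero_right] at this
  apply hy
  simp only [Metric.mem_closedBall, dist_zero_right]
  have : ‖ε⁻¹ • y‖ < δ₀ := by simpa using this
  rw [norm_smul, norm_inv, Real.norm_eq_abs, abs_of_pos hε] at this
  rw [inv_mul_lt_iff₀ hε] at this; linarith

lemma bern_up' (n : ℕ) : ∀ u : ℝ, 0 ≤ u → u ≤ 1 → (1+u)^n ≤ 1 + ((2:ℝ)^n - 1) * u := by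
  induction n with
  | zero => intro u hu _; simp
  | succ n ih =>
    intro u hu hu1
    have h1 : (1+u)^(n+1) = (1+u)^n * (1+u) := by ring
    have h2 := ih u hu hu1
    have h2n : (1:ℝ) ≤ 2^n := one_le_pow₀ (by norm_num)
    calc (1+u)^(n+1) ≤ (1 + ((2:ℝ)^n - 1) * u) * (1+u) := by
          rw [h1]; apply mul_le_mul_of_nonneg_right h2 (by linarith)
      _ = 1 + (2^n - 1 + 1) * u + (2^n - 1) * u^2 := by ring
      _ ≤ 1 + (2^n - 1 + 1) * u + (2^n - 1) * u := by
          have hu2 : u^2 ≤ u := by nlinarith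
          have := mul_le_mul_of_nonneg_left hu2 (by linarith : (0:ℝ) ≤ 2^n - 1)
          linarith
      _ = 1 + ((2:ℝ)^(n+1) - 1) * u := by ring

lemma pow_add_le'' {t s : ℝ} (ht : 1 ≤ t) (hs : 0 ≤ s) (hs1 : s ≤ 1) (n : ℕ) :
    (t+s)^n ≤ t^n + 2^n * t^((n:ℝ)-1) * s := by
  have ht0 : (0:ℝ) < t := by linarith
  have hu : 0 ≤ s/t := by positivity
  have hu1 : s/t ≤ 1 := by rw [div_le_one ht0]; linarith
  have key := bern_up' n (s/t) hu hu1
  have h1 : (t+s)^n = t^n * (1+s/t)^n := by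
    rw [← mul_pow]; congr 1; field_simp
  have hrp : t^((n:ℝ)-1) = t^n / t := by
    rw [Real.rpow_sub ht0, Real.rpow_natCast, Real.rpow_one]
  rw [h1, hrp]
  have h2 : t^n * (1+s/t)^n ≤ t^n * (1 + ((2:ℝ)^n - 1) * (s/t)) :=
    mul_le_mul_of_nonneg_left key (by positivity)
  calc t^n * (1+s/t)^n ≤ t^n * (1 + ((2:ℝ)^n - 1) * (s/t)) := h2
    _ = t^n + (2^n - 1) * (t^n / t * s) := by field_simp
    _ ≤ t^n + 2^n * (t^n / t * s) := by
        have : (0:ℝ) ≤ t^n / t * s := by positivity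
        nlinarith
    _ = t^n + 2^n * (t^n/t) * s := by ring

lemma pow_sub_le'' {t s : ℝ} (ht : 1 ≤ t) (hs : 0 ≤ s) (hs1 : s ≤ 1/2) (n : ℕ) :
    t^n - (t-s)^n ≤ 2^n * t^((n:ℝ)-1) * s := by
  have ht0 : (0:ℝ) < t := by linarith
  have hu1 : s/t ≤ 1 := by rw [div_le_one ht0]; linarith
  have hbern : 1 + (n:ℝ) * (-(s/t)) ≤ (1 + (-(s/t)))^n := by
    apply one_add_mul_le_pow
    have : s/t ≤ 1 := hu1
    linarith
  have h1 : (t-s)^n = t^n * (1-s/t)^n := by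
    rw [← mul_pow]; congr 1; field_simp
  have hrp : t^((n:ℝ)-1) = t^n / t := by
    rw [Real.rpow_sub ht0, Real.rpow_natCast, Real.rpow_one]
  have h2 : t^n * (1 - (n:ℝ)*(s/t)) ≤ t^n * (1-s/t)^n := by
    apply mul_le_mul_of_nonneg_left _ (by positivity)
    calc 1 - (n:ℝ)*(s/t) = 1 + (n:ℝ) * (-(s/t)) := by ring
      _ ≤ (1 + (-(s/t)))^n := hbern
      _ = (1 - s/t)^n := by ring_nf
  have hn2 : (n:ℝ) ≤ 2^n := by exact_mod_cast (Nat.lt_two_pow_self (n := n)).le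
  rw [h1, hrp]
  have h3 : t^n - t^n * (1-s/t)^n ≤ t^n * ((n:ℝ)*(s/t)) := by nlinarith
  calc t^n - t^n*(1-s/t)^n ≤ t^n * ((n:ℝ)*(s/t)) := h3
    _ = (n:ℝ) * (t^n/t * s) := by field_simp
    _ ≤ 2^n * (t^n/t * s) := by
        apply mul_le_mul_of_nonneg_right hn2 (by positivity)
    _ = 2^n * (t^n/t) * s := by ring

lemma rpow_comparable' {t s e : ℝ} (ht : 1 ≤ t) (hs : t/2 ≤ s) (hs2 : s ≤ 2*t)
    (d : ℕ) (he1 : -2 ≤ e) (he2 : e ≤ d) :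
    s ^ e ≤ 2^((d:ℝ)+2) * t^e := by
  have ht0 : (0:ℝ) < t := by linarith
  have hs0 : (0:ℝ) < s := by linarith
  rcases le_or_gt 0 e with he | he
  · calc s^e ≤ (2*t)^e := Real.rpow_le_rpow hs0.le hs2 he
      _ = 2^e * t^e := Real.mul_rpow (by norm_num) ht0.le
      _ ≤ 2^((d:ℝ)+2) * t^e := by
          apply mul_le_mul_of_nonneg_right _ (Real.rpow_nonneg ht0.le e)
          exact Real.rpow_le_rpow_of_exponent_le (by norm_num) (by linarith)
  · calc s^e ≤ (t/2)^e := Real.rpow_le_rpow_of_nonpos (by linarith) hs he.le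
      _ = t^e / 2^e := Real.div_rpow ht0.le (by norm_num : (0:ℝ) ≤ 2) e
      _ = t^e * (2:ℝ)^(-e) := by rw [Real.rpow_neg (by norm_num)]; ring
      _ ≤ t^e * 2^((d:ℝ)+2) := by
          apply mul_le_mul_of_nonneg_left _ (Real.rpow_nonneg ht0.le e)
          exact Real.rpow_le_rpow_of_exponent_le (by norm_num)
            (by have : (0:ℝ) ≤ (d:ℝ) := Nat.cast_nonneg d; linarith)
      _ = 2^((d:ℝ)+2) * t^e := by ring

end Aux

theorem mollified_remainder_pointwise_bound {d : ℕ}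
    (Ω : Set (EuclideanSpace ℝ (Fin d)))
    (hconv : Convex ℝ Ω) (hopen : IsOpen Ω) (hbdd : Bornology.IsBounded Ω)
    (h0 : 0 ∈ interior Ω) (hC1 : C1Boundary Ω)
    (δ₀ : ℝ) (hδ₀ : 0 < δ₀) (hball : Metric.ball (0 : EuclideanSpace ℝ (Fin d)) (2 * δ₀) ⊆ Ω)
    (ζ : EuclideanSpace ℝ (Fin d) → ℝ) (hζsm : ContDiff ℝ (⊤ : ℕ∞) ζ)
    (hζpos : ∀ x, 0 ≤ ζ x)
    (hζsupp : Function.support ζ ⊆ Metric.ball 0 δ₀)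
    (hζrad : ∀ x y : EuclideanSpace ℝ (Fin d), ‖x‖ = ‖y‖ → ζ x = ζ y)
    (hζint : ∫ x : EuclideanSpace ℝ (Fin d), ζ x = 1)
    (μ : ℝ) (hμ0 : 0 ≤ μ) (hμ1 : μ ≤ 1) (C₁ : ℝ)
    (hE : ∀ t : ℝ, 0 < t → t ^ (-((d : ℝ) - 1 - μ)) * |latticeErr Ω t| ≤ C₁) :
    ∃ C : ℝ, 0 < C ∧ ∀ t : ℝ, 1 ≤ t → ∀ ε : ℝ, 0 < ε → ε ≤ 1 →
      |mollifiedErr Ω ζ ε t| ≤ C * max (t ^ ((d : ℝ) - 1 - μ)) (t ^ ((d : ℝ) - 1) * ε) := by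
  set V := (volume Ω).toReal with hVdef
  have hV0 : 0 ≤ V := ENNReal.toReal_nonneg
  have hC₁0 : 0 ≤ C₁ := by
    have h := hE 1 one_pos
    rw [Real.one_rpow, one_mul] at h
    exact le_trans (abs_nonneg _) h
  set e : ℝ := (d:ℝ) - 1 - μ with hedef
  have hEbound : ∀ s : ℝ, 0 < s → |latticeErr Ω s| ≤ C₁ * s ^ e := by
    intro s hs
    have h := hE s hs
    rw [Real.rpow_neg hs.le] at h
    have hse : (0:ℝ) < s ^ e := Real.rpow_pos_of_pos hs e
    rw [inv_mul_le_iff₀ hse] at h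
    linarith [h]
  refine ⟨C₁ * 2^((d:ℝ)+2) + 2^d * V + 1, ?_, ?_⟩
  · have h1 : (0:ℝ) ≤ C₁ * 2^((d:ℝ)+2) := mul_nonneg hC₁0 (Real.rpow_nonneg (by norm_num) _)
    have h2 : (0:ℝ) ≤ 2^d * V := mul_nonneg (by positivity) hV0
    linarith
  intro t ht ε hε hε1
  have ht0 : (0:ℝ) < t := by linarith
  have htne : t ≠ 0 := ht0.ne'
  -- the weight function
  set w : EuclideanSpace ℝ (Fin d) → ℝ := fun y => (ε ^ d)⁻¹ * ζ (ε⁻¹ • y) with hwdef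
  have hw0 : ∀ y, 0 ≤ w y := fun y => mul_nonneg (by positivity) (hζpos _)
  have hwint : Integrable w := w_integrable ζ hζsm hζsupp hε
  have hwone : ∫ y, w y = 1 := w_integral_one ζ hζint hε
  have hwsupp : ∀ y : EuclideanSpace ℝ (Fin d), w y ≠ 0 → ‖y‖ < ε * δ₀ := by
    intro y hy
    have hζy : ζ (ε⁻¹ • y) ≠ 0 := by
      intro h; apply hy; simp [hwdef, h]
    have := hζsupp (Function.mem_support.2 hζy)
    simp only [Metric.mem_ball, dist_zero_right] at this
    rw [norm_smul, norm_inv, Real.norm_eq_abs, abs_of_pos hε, inv_mul_lt_iff₀ hε] at this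
    linarith
  -- indicator comparison functions
  set f : (Fin d → ℤ) → ℝ := fun k => ∫ y : EuclideanSpace ℝ (Fin d),
    Set.indicator (t • Ω) (fun _ => (1 : ℝ)) (intVec k - y) * w y with hfdef
  set gUp : (Fin d → ℤ) → ℝ :=
    fun k => Set.indicator ((t + ε/2) • Ω) (fun _ => (1:ℝ)) (intVec k) with hgUpdef
  set gDn : (Fin d → ℤ) → ℝ :=
    fun k => Set.indicator ((t - ε/2) • Ω) (fun _ => (1:ℝ)) (intVec k) with hgDndef
  have hmC : mollifiedCount Ω ζ ε t = ∑' k, f k := rfl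
  -- integrability of the integrand
  have hintk : ∀ k : Fin d → ℤ, Integrable
      (fun y : EuclideanSpace ℝ (Fin d) =>
        Set.indicator (t • Ω) (fun _ => (1 : ℝ)) (intVec k - y) * w y) := by
    intro k
    have hSmeas : MeasurableSet (t • Ω) := (hopen.smul₀ htne).measurableSet
    have hmeas : Measurable (fun y : EuclideanSpace ℝ (Fin d) =>
        Set.indicator (t • Ω) (fun _ => (1 : ℝ)) (intVec k - y)) := by
      exact (measurable_const.indicator hSmeas).comp (measurable_const.sub measurable_id)
    have hwc : Continuous w := by
      apply Continuous.mul continuous_const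
      exact hζsm.continuous.comp (continuous_const_smul _)
    apply Integrable.mono' hwint ((hmeas.mul hwc.measurable).aestronglyMeasurable)
    apply ae_of_all
    intro y
    simp only [Pi.mul_apply]
    rw [Real.norm_eq_abs, abs_of_nonneg (mul_nonneg (Set.indicator_nonneg (fun _ _ => zero_le_one) _) (hw0 y))]
    have hle1 : Set.indicator (t • Ω) (fun _ => (1 : ℝ)) (intVec k - y) ≤ 1 := by
      by_cases hmem : intVec k - y ∈ t • Ω
      · rw [Set.indicator_of_mem hmem]
      · rw [Set.indicator_of_notMem hmem]; exact zero_le_one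
    calc Set.indicator (t • Ω) (fun _ => (1 : ℝ)) (intVec k - y) * w y
        ≤ 1 * w y := mul_le_mul_of_nonneg_right hle1 (hw0 y)
      _ = w y := one_mul _
  have hf0 : ∀ k, 0 ≤ f k := fun k =>
    integral_nonneg fun y => mul_nonneg (Set.indicator_nonneg (fun _ _ => zero_le_one) _) (hw0 y)
  -- upper pointwise bound
  have hf_le : ∀ k, f k ≤ gUp k := by
    intro k
    have hstep : f k ≤ ∫ y : EuclideanSpace ℝ (Fin d), gUp k * w y := by
      apply integral_mono_of_nonneg
      · exact ae_of_all _ fun y =>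
          mul_nonneg (Set.indicator_nonneg (fun _ _ => zero_le_one) _) (hw0 y)
      · exact hwint.const_mul _
      · apply ae_of_all
        intro y
        by_cases hwy : w y = 0
        · simp [hwy]
        · apply mul_le_mul_of_nonneg_right _ (hw0 y)
          have hy : ‖y‖ < ε * δ₀ := hwsupp y hwy
          simp only [hgUpdef]
          by_cases hmem : intVec k - y ∈ t • Ω
          · rw [Set.indicator_of_mem hmem,
              Set.indicator_of_mem (geom_up' hconv hball ht hε hy hmem)]
          · rw [Set.indicator_of_notMem hmem]
            exact Set.indicator_nonneg (fun _ _ => zero_le_one) _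
    rwa [integral_const_mul, hwone, mul_one] at hstep
  -- lower pointwise bound
  have hf_ge : ∀ k, gDn k ≤ f k := by
    intro k
    have hstep : (∫ y : EuclideanSpace ℝ (Fin d), gDn k * w y) ≤ f k := by
      apply integral_mono_of_nonneg
      · exact ae_of_all _ fun y =>
          mul_nonneg (Set.indicator_nonneg (fun _ _ => zero_le_one) _) (hw0 y)
      · exact hintk k
      · apply ae_of_all
        intro y
        by_cases hwy : w y = 0
        · simp [hwy]
        · apply mul_le_mul_of_nonneg_right _ (hw0 y)
          have hy : ‖y‖ < ε * δ₀ := hwsupp y hwy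
          simp only [hgDndef]
          by_cases hmem : intVec k ∈ (t - ε/2) • Ω
          · rw [Set.indicator_of_mem hmem,
              Set.indicator_of_mem (geom_down' hconv hball ht hε hε1 hy hmem)]
          · rw [Set.indicator_of_notMem hmem]
            exact Set.indicator_nonneg (fun _ _ => zero_le_one) _
    rwa [integral_const_mul, hwone, mul_one] at hstep
  -- summability
  have hbddUp : Bornology.IsBounded ((t + ε/2) • Ω) := hbdd.smul₀ _
  have hbddDn : Bornology.IsBounded ((t - ε/2) • Ω) := hbdd.smul₀ _
  have hsumUp : Summable gUp := summable_indicator_lattice' _ hbddUp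
  have hsumDn : Summable gDn := summable_indicator_lattice' _ hbddDn
  have hsumf : Summable f := Summable.of_nonneg_of_le hf0 hf_le hsumUp
  -- count sandwich
  have hup : mollifiedCount Ω ζ ε t ≤ latticeCount Ω (t + ε/2) := by
    rw [hmC, latticeCount_eq', ← tsum_indicator_eq']
    exact Summable.tsum_le_tsum hf_le hsumf hsumUp
  have hdn : latticeCount Ω (t - ε/2) ≤ mollifiedCount Ω ζ ε t := by
    rw [hmC, latticeCount_eq', ← tsum_indicator_eq']
    exact Summable.tsum_le_tsum hf_ge hsumDn hsumf
  -- error bounds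
  have htup : (0:ℝ) < t + ε/2 := by linarith
  have htdn : (0:ℝ) < t - ε/2 := by linarith
  have hEup := hEbound (t + ε/2) htup
  have hEdn := hEbound (t - ε/2) htdn
  have hrUp : (t + ε/2) ^ e ≤ 2^((d:ℝ)+2) * t^e :=
    rpow_comparable' ht (by linarith) (by linarith) d (by simp only [hedef]; push_cast; linarith)
      (by simp only [hedef]; push_cast; linarith)
  have hrDn : (t - ε/2) ^ e ≤ 2^((d:ℝ)+2) * t^e :=
    rpow_comparable' ht (by linarith) (by linarith) d (by simp only [hedef]; push_cast; linarith)
      (by simp only [hedef]; push_cast; linarith)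
  have hpowUp : (t + ε/2)^d - t^d ≤ 2^d * t^((d:ℝ)-1) * (ε/2) := by
    have := pow_add_le'' ht (by linarith : (0:ℝ) ≤ ε/2) (by linarith) d
    linarith
  have hpowDn : t^d - (t - ε/2)^d ≤ 2^d * t^((d:ℝ)-1) * (ε/2) :=
    pow_sub_le'' ht (by linarith) (by linarith) d
  set M := max (t ^ ((d:ℝ) - 1 - μ)) (t ^ ((d:ℝ) - 1) * ε) with hMdef
  have hM0 : 0 ≤ M := le_trans (Real.rpow_nonneg ht0.le _) (le_max_left _ _)
  have hMe : t ^ e ≤ M := le_max_left _ _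
  have hMε : t ^ ((d:ℝ) - 1) * ε ≤ M := le_max_right _ _
  have htd1 : (0:ℝ) ≤ t ^ ((d:ℝ)-1) := Real.rpow_nonneg ht0.le _
  -- final bound B
  have hBup : mollifiedErr Ω ζ ε t ≤ C₁ * 2^((d:ℝ)+2) * t^e + 2^d * V * (t^((d:ℝ)-1) * ε) := by
    have h1 : mollifiedErr Ω ζ ε t ≤ latticeErr Ω (t + ε/2) + ((t + ε/2)^d - t^d) * V := by
      unfold mollifiedErr latticeErr
      linarith [hup]
    have h2 : latticeErr Ω (t + ε/2) ≤ C₁ * 2^((d:ℝ)+2) * t^e := by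
      have := le_trans (le_abs_self _) hEup
      calc latticeErr Ω (t + ε/2) ≤ C₁ * (t + ε/2)^e := this
        _ ≤ C₁ * (2^((d:ℝ)+2) * t^e) := mul_le_mul_of_nonneg_left hrUp hC₁0
        _ = C₁ * 2^((d:ℝ)+2) * t^e := by ring
    have h3 : ((t + ε/2)^d - t^d) * V ≤ 2^d * V * (t^((d:ℝ)-1) * ε) := by
      calc ((t + ε/2)^d - t^d) * V ≤ (2^d * t^((d:ℝ)-1) * (ε/2)) * V :=
            mul_le_mul_of_nonneg_right hpowUp hV0
        _ = (2^d * V * t^((d:ℝ)-1)) * (ε/2) := by ring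
        _ ≤ (2^d * V * t^((d:ℝ)-1)) * ε := by
            apply mul_le_mul_of_nonneg_left (by linarith)
              (mul_nonneg (mul_nonneg (by positivity) hV0) htd1)
        _ = 2^d * V * (t^((d:ℝ)-1) * ε) := by ring
    linarith
  have hBdn : -(C₁ * 2^((d:ℝ)+2) * t^e + 2^d * V * (t^((d:ℝ)-1) * ε)) ≤ mollifiedErr Ω ζ ε t := by
    have h1 : latticeErr Ω (t - ε/2) - (t^d - (t - ε/2)^d) * V ≤ mollifiedErr Ω ζ ε t := by
      unfold mollifiedErr latticeErr
      linarith [hdn]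
    have h2 : -(C₁ * 2^((d:ℝ)+2) * t^e) ≤ latticeErr Ω (t - ε/2) := by
      have := le_trans (neg_abs_le _) (le_refl (latticeErr Ω (t - ε/2)))
      have habs := hEdn
      have h4 : -(C₁ * (t - ε/2)^e) ≤ latticeErr Ω (t - ε/2) := by
        have := neg_abs_le (latticeErr Ω (t - ε/2))
        linarith
      have h5 : C₁ * (t - ε/2)^e ≤ C₁ * (2^((d:ℝ)+2) * t^e) :=
        mul_le_mul_of_nonneg_left hrDn hC₁0
      have h6 : C₁ * 2^((d:ℝ)+2) * t^e = C₁ * (2^((d:ℝ)+2) * t^e) := by ring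
      linarith
    have h3 : (t^d - (t - ε/2)^d) * V ≤ 2^d * V * (t^((d:ℝ)-1) * ε) := by
      calc (t^d - (t - ε/2)^d) * V ≤ (2^d * t^((d:ℝ)-1) * (ε/2)) * V :=
            mul_le_mul_of_nonneg_right hpowDn hV0
        _ = (2^d * V * t^((d:ℝ)-1)) * (ε/2) := by ring
        _ ≤ (2^d * V * t^((d:ℝ)-1)) * ε := by
            apply mul_le_mul_of_nonneg_left (by linarith)
              (mul_nonneg (mul_nonneg (by positivity) hV0) htd1)
        _ = 2^d * V * (t^((d:ℝ)-1) * ε) := by ring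
    linarith
  -- conclude
  rw [abs_le]
  have hcoef1 : (0:ℝ) ≤ C₁ * 2^((d:ℝ)+2) := mul_nonneg hC₁0 (Real.rpow_nonneg (by norm_num) _)
  have hcoef2 : (0:ℝ) ≤ 2^d * V := mul_nonneg (by positivity) hV0
  have hfin : C₁ * 2^((d:ℝ)+2) * t^e + 2^d * V * (t^((d:ℝ)-1) * ε)
      ≤ (C₁ * 2^((d:ℝ)+2) + 2^d * V + 1) * M := by
    have hA := mul_le_mul_of_nonneg_left hMe hcoef1
    have hB := mul_le_mul_of_nonneg_left hMε hcoef2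
    have hexp : (C₁ * 2^((d:ℝ)+2) + 2^d * V + 1) * M
        = C₁ * 2^((d:ℝ)+2) * M + 2^d * V * M + M := by ring
    linarith [hA, hB, hM0, hexp]
  constructor
  · calc -((C₁ * 2^((d:ℝ)+2) + 2^d * V + 1) * M)
        ≤ -(C₁ * 2^((d:ℝ)+2) * t^e + 2^d * V * (t^((d:ℝ)-1) * ε)) := by linarith
      _ ≤ mollifiedErr Ω ζ ε t := hBdn
  · exact le_trans hBup hfin
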